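/- (Second Decomposition Lemma, formula.) Let S and B be independent [0,1]-valued random variables. Then for every price p ∈ [0,1], E[gft(p,S,B)] = P[S ≤ p]·∫_p^1 P[B ≥ λ] dλ + P[B ≥ p]·∫_0^p P[S ≤ λ] dλ. -/

import Mathlib

open MeasureTheory ProbabilityTheory Set
open scoped ENNReal

/-- Gain from trade: `gft p s b = (b - s) · 𝟙{s ≤ p ≤ b}`. -/
noncomputable def gft (p s b : ℝ) : ℝ := if s ≤ p ∧ p ≤ b then b - s else 0


lemma layer_B {Ω : Type} [MeasurableSpace Ω] (μ : Measure Ω) [IsProbabilityMeasure μ]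
    (B : Ω → ℝ) (hB : Measurable B) (hBr : ∀ ω, B ω ∈ Icc (0:ℝ) 1)
    (p : ℝ) (hp : p ∈ Icc (0:ℝ) 1) :
    ∫ ω, (if p ≤ B ω then B ω - p else 0) ∂μ
      = ∫ l in p..1, (μ {ω | l ≤ B ω}).toReal := by
  have hA : MeasurableSet {q : Ω × ℝ | q.2 ≤ B q.1} := by
    have : {q : Ω × ℝ | q.2 ≤ B q.1}
        = (fun q : Ω × ℝ => (q.2, B q.1)) ⁻¹' {r : ℝ × ℝ | r.1 ≤ r.2} := rfl
    rw [this]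
    exact (measurable_snd.prodMk (hB.comp measurable_fst)) measurableSet_le'
  -- the two ways of computing the product measure of A
  have key : ∫⁻ ω, ENNReal.ofReal (B ω - p) ∂μ
      = ∫⁻ l in Set.Ioc p 1, μ {ω | l ≤ B ω} := by
    have h1 := Measure.prod_apply (μ := μ) (ν := volume.restrict (Set.Ioc p 1)) hA
    have h2 := Measure.prod_apply_symm (μ := μ) (ν := volume.restrict (Set.Ioc p 1)) hA
    rw [h2] at h1
    calc ∫⁻ ω, ENNReal.ofReal (B ω - p) ∂μ
        = ∫⁻ ω, (volume.restrict (Set.Ioc p 1)) (Prod.mk ω ⁻¹' {q : Ω × ℝ | q.2 ≤ B q.1}) ∂μ := by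
          apply lintegral_congr fun ω => ?_
          have : Prod.mk ω ⁻¹' {q : Ω × ℝ | q.2 ≤ B q.1} = Set.Iic (B ω) := rfl
          rw [this, Measure.restrict_apply measurableSet_Iic]
          have : Set.Iic (B ω) ∩ Set.Ioc p 1 = Set.Ioc p (B ω) := by
            ext l
            simp only [Set.mem_inter_iff, Set.mem_Iic, Set.mem_Ioc]
            constructor
            · rintro ⟨h1, h2, h3⟩; exact ⟨h2, h1⟩
            · rintro ⟨h1, h2⟩; exact ⟨h2, h1, h2.trans ((hBr ω).2)⟩
          rw [this, Real.volume_Ioc]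
      _ = ∫⁻ l in Set.Ioc p 1, μ ((fun ω => (ω, l)) ⁻¹' {q : Ω × ℝ | q.2 ≤ B q.1}) := h1.symm
      _ = ∫⁻ l in Set.Ioc p 1, μ {ω | l ≤ B ω} := rfl
  -- LHS
  have hmg : Measurable fun ω => (if p ≤ B ω then B ω - p else 0 : ℝ) :=
    Measurable.ite (hB measurableSet_Ici) (hB.sub measurable_const) measurable_const
  have hLHS : ∫ ω, (if p ≤ B ω then B ω - p else 0) ∂μ
      = (∫⁻ ω, ENNReal.ofReal (B ω - p) ∂μ).toReal := by
    have hnn : 0 ≤ᵐ[μ] fun ω => (if p ≤ B ω then B ω - p else 0 : ℝ) := by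
      filter_upwards with ω
      by_cases h : p ≤ B ω <;> simp [h] <;> linarith
    rw [integral_eq_lintegral_of_nonneg_ae hnn hmg.aestronglyMeasurable]
    congr 1
    apply lintegral_congr fun ω => ?_
    split_ifs with h
    · rfl
    · simp [ENNReal.ofReal_eq_zero, le_of_lt (sub_neg.mpr (lt_of_not_ge h))]
  -- RHS
  have hmono : Antitone fun l : ℝ => μ {ω | l ≤ B ω} := fun a b hab =>
    measure_mono fun ω (h : b ≤ B ω) => hab.trans h
  have hRHS : ∫ l in p..1, (μ {ω | l ≤ B ω}).toReal
      = (∫⁻ l in Set.Ioc p 1, μ {ω | l ≤ B ω}).toReal := by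
    rw [intervalIntegral.integral_of_le hp.2]
    rw [integral_toReal (hmono.measurable.aemeasurable)]
    exact Filter.Eventually.of_forall fun l => lt_of_le_of_lt prob_le_one ENNReal.one_lt_top
  rw [hLHS, hRHS, key]

lemma layer_S {Ω : Type} [MeasurableSpace Ω] (μ : Measure Ω) [IsProbabilityMeasure μ]
    (S : Ω → ℝ) (hS : Measurable S) (hSr : ∀ ω, S ω ∈ Icc (0:ℝ) 1)
    (p : ℝ) (hp : p ∈ Icc (0:ℝ) 1) :
    ∫ ω, (if S ω ≤ p then p - S ω else 0) ∂μ
      = ∫ l in (0:ℝ)..p, (μ {ω | S ω ≤ l}).toReal := by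
  have hA : MeasurableSet {q : Ω × ℝ | S q.1 ≤ q.2} := by
    have : {q : Ω × ℝ | S q.1 ≤ q.2}
        = (fun q : Ω × ℝ => (S q.1, q.2)) ⁻¹' {r : ℝ × ℝ | r.1 ≤ r.2} := rfl
    rw [this]
    exact ((hS.comp measurable_fst).prodMk measurable_snd) measurableSet_le'
  have key : ∫⁻ ω, ENNReal.ofReal (p - S ω) ∂μ
      = ∫⁻ l in Set.Ioc 0 p, μ {ω | S ω ≤ l} := by
    have h1 := Measure.prod_apply (μ := μ) (ν := volume.restrict (Set.Ioc 0 p)) hA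
    have h2 := Measure.prod_apply_symm (μ := μ) (ν := volume.restrict (Set.Ioc 0 p)) hA
    rw [h2] at h1
    calc ∫⁻ ω, ENNReal.ofReal (p - S ω) ∂μ
        = ∫⁻ ω, (volume.restrict (Set.Ioc 0 p)) (Prod.mk ω ⁻¹' {q : Ω × ℝ | S q.1 ≤ q.2}) ∂μ := by
          apply lintegral_congr fun ω => ?_
          have hpre : Prod.mk ω ⁻¹' {q : Ω × ℝ | S q.1 ≤ q.2} = Set.Ici (S ω) := rfl
          rw [hpre, Measure.restrict_apply measurableSet_Ici]
          refine (le_antisymm ?_ ?_).symm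
          · calc volume (Set.Ici (S ω) ∩ Set.Ioc 0 p) ≤ volume (Set.Icc (S ω) p) := by
                  apply measure_mono
                  rintro l ⟨h1, h2, h3⟩
                  exact ⟨h1, h3⟩
              _ = ENNReal.ofReal (p - S ω) := Real.volume_Icc
          · calc ENNReal.ofReal (p - S ω) = volume (Set.Ioc (S ω) p) := Real.volume_Ioc.symm
              _ ≤ volume (Set.Ici (S ω) ∩ Set.Ioc 0 p) := by
                  apply measure_mono
                  rintro l ⟨h1, h2⟩
                  exact ⟨h1.le, lt_of_le_of_lt (hSr ω).1 h1, h2⟩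
      _ = ∫⁻ l in Set.Ioc 0 p, μ ((fun ω => (ω, l)) ⁻¹' {q : Ω × ℝ | S q.1 ≤ q.2}) := h1.symm
      _ = ∫⁻ l in Set.Ioc 0 p, μ {ω | S ω ≤ l} := rfl
  have hmg : Measurable fun ω => (if S ω ≤ p then p - S ω else 0 : ℝ) :=
    Measurable.ite (hS measurableSet_Iic) (measurable_const.sub hS) measurable_const
  have hLHS : ∫ ω, (if S ω ≤ p then p - S ω else 0) ∂μ
      = (∫⁻ ω, ENNReal.ofReal (p - S ω) ∂μ).toReal := by
    have hnn : 0 ≤ᵐ[μ] fun ω => (if S ω ≤ p then p - S ω else 0 : ℝ) := by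
      filter_upwards with ω
      by_cases h : S ω ≤ p <;> simp [h] <;> linarith
    rw [integral_eq_lintegral_of_nonneg_ae hnn hmg.aestronglyMeasurable]
    congr 1
    apply lintegral_congr fun ω => ?_
    split_ifs with h
    · rfl
    · simp [ENNReal.ofReal_eq_zero, le_of_lt (sub_neg.mpr (lt_of_not_ge h))]
  have hmono : Monotone fun l : ℝ => μ {ω | S ω ≤ l} := fun a b hab =>
    measure_mono fun ω (h : S ω ≤ a) => h.trans hab
  have hRHS : ∫ l in (0:ℝ)..p, (μ {ω | S ω ≤ l}).toReal
      = (∫⁻ l in Set.Ioc 0 p, μ {ω | S ω ≤ l}).toReal := by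
    rw [intervalIntegral.integral_of_le hp.1]
    rw [integral_toReal (hmono.measurable.aemeasurable)]
    exact Filter.Eventually.of_forall fun l => lt_of_le_of_lt prob_le_one ENNReal.one_lt_top
  rw [hLHS, hRHS, key]

/-- **Second Decomposition Lemma (formula).**
If `S` and `B` are independent `[0,1]`-valued random variables, then for every `p ∈ [0,1]`,
`E[gft(p,S,B)] = P[S ≤ p]·∫_p^1 P[B ≥ λ] dλ + P[B ≥ p]·∫_0^p P[S ≤ λ] dλ`. -/
theorem second_decomposition_formula
    {Ω : Type} [MeasurableSpace Ω] (μ : Measure Ω) [IsProbabilityMeasure μ]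
    (S B : Ω → ℝ) (hS : Measurable S) (hB : Measurable B)
    (hSr : ∀ ω, S ω ∈ Icc (0:ℝ) 1) (hBr : ∀ ω, B ω ∈ Icc (0:ℝ) 1)
    (hindep : IndepFun S B μ)
    (p : ℝ) (hp : p ∈ Icc (0:ℝ) 1) :
    ∫ ω, gft p (S ω) (B ω) ∂μ
      = (μ {ω | S ω ≤ p}).toReal * (∫ l in p..1, (μ {ω | l ≤ B ω}).toReal)
        + (μ {ω | p ≤ B ω}).toReal * ∫ l in (0:ℝ)..p, (μ {ω | S ω ≤ l}).toReal := by
  set f1 : ℝ → ℝ := fun s => if s ≤ p then 1 else 0 with hf1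
  set g1 : ℝ → ℝ := fun b => if p ≤ b then b - p else 0 with hg1
  set g2 : ℝ → ℝ := fun b => if p ≤ b then 1 else 0 with hg2
  set f2 : ℝ → ℝ := fun s => if s ≤ p then p - s else 0 with hf2
  have mf1 : Measurable f1 :=
    Measurable.ite measurableSet_Iic measurable_const measurable_const
  have mg1 : Measurable g1 :=
    Measurable.ite measurableSet_Ici (measurable_id.sub measurable_const) measurable_const
  have mg2 : Measurable g2 :=
    Measurable.ite measurableSet_Ici measurable_const measurable_const
  have mf2 : Measurable f2 :=
    Measurable.ite measurableSet_Iic (measurable_const.sub measurable_id) measurable_const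
  have hdecomp : ∀ ω, gft p (S ω) (B ω) = f1 (S ω) * g1 (B ω) + g2 (B ω) * f2 (S ω) := by
    intro ω
    simp only [gft, hf1, hg1, hg2, hf2]
    by_cases h1 : S ω ≤ p <;> by_cases h2 : p ≤ B ω <;> simp [h1, h2] <;> ring
  have bd1 : ∀ ω, ‖f1 (S ω) * g1 (B ω)‖ ≤ 1 := by
    intro ω
    have h1 := hSr ω; have h2 := hBr ω
    simp only [hf1, hg1, Real.norm_eq_abs]
    by_cases ha : S ω ≤ p <;> by_cases hb : p ≤ B ω <;> simp [ha, hb] <;>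
      rw [abs_le] <;> constructor <;> linarith [h2.1, h2.2, hp.1, hp.2]
  have bd2 : ∀ ω, ‖g2 (B ω) * f2 (S ω)‖ ≤ 1 := by
    intro ω
    have h1 := hSr ω; have h2 := hBr ω
    simp only [hg2, hf2, Real.norm_eq_abs]
    by_cases ha : S ω ≤ p <;> by_cases hb : p ≤ B ω <;> simp [ha, hb] <;>
      rw [abs_le] <;> constructor <;> linarith [h1.1, h1.2, hp.1, hp.2]
  have i1 : Integrable (fun ω => f1 (S ω) * g1 (B ω)) μ :=
    Integrable.mono' (integrable_const 1)
      (((mf1.comp hS).mul (mg1.comp hB)).aestronglyMeasurable)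
      (Filter.Eventually.of_forall bd1)
  have i2 : Integrable (fun ω => g2 (B ω) * f2 (S ω)) μ :=
    Integrable.mono' (integrable_const 1)
      (((mg2.comp hB).mul (mf2.comp hS)).aestronglyMeasurable)
      (Filter.Eventually.of_forall bd2)
  have e1 : ∫ ω, f1 (S ω) ∂μ = (μ {ω | S ω ≤ p}).toReal := by
    have h : (fun ω => f1 (S ω)) = Set.indicator {ω | S ω ≤ p} (1 : Ω → ℝ) := by
      ext ω; simp [hf1, Set.indicator_apply]
    rw [h]; exact integral_indicator_one (hS measurableSet_Iic)
  have e2 : ∫ ω, g2 (B ω) ∂μ = (μ {ω | p ≤ B ω}).toReal := by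
    have h : (fun ω => g2 (B ω)) = Set.indicator {ω | p ≤ B ω} (1 : Ω → ℝ) := by
      ext ω; simp [hg2, Set.indicator_apply]
    rw [h]; exact integral_indicator_one (hB measurableSet_Ici)
  calc ∫ ω, gft p (S ω) (B ω) ∂μ
      = ∫ ω, (f1 (S ω) * g1 (B ω) + g2 (B ω) * f2 (S ω)) ∂μ :=
        integral_congr_ae (Filter.Eventually.of_forall hdecomp)
    _ = (∫ ω, f1 (S ω) * g1 (B ω) ∂μ) + ∫ ω, g2 (B ω) * f2 (S ω) ∂μ := integral_add i1 i2
    _ = (∫ ω, f1 (S ω) ∂μ) * (∫ ω, g1 (B ω) ∂μ)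
        + (∫ ω, g2 (B ω) ∂μ) * (∫ ω, f2 (S ω) ∂μ) := by
        have m1 := (hindep.comp mf1 mg1).integral_fun_mul_eq_mul_integral
            ((mf1.comp hS).aestronglyMeasurable) ((mg1.comp hB).aestronglyMeasurable)
        have m2 := (hindep.symm.comp mg2 mf2).integral_fun_mul_eq_mul_integral
            ((mg2.comp hB).aestronglyMeasurable) ((mf2.comp hS).aestronglyMeasurable)
        simp only [Function.comp] at m1 m2
        rw [m1, m2]
    _ = (μ {ω | S ω ≤ p}).toReal * (∫ l in p..1, (μ {ω | l ≤ B ω}).toReal)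
        + (μ {ω | p ≤ B ω}).toReal * ∫ l in (0:ℝ)..p, (μ {ω | S ω ≤ l}).toReal := by
        rw [e1, e2, layer_B μ B hB hBr p hp, layer_S μ S hS hSr p hp]
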